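/- Pinsker's inequality: for probability densities p and q on a measure space, the L¹ distance satisfies ‖p − q‖₁ ≤ √(2·KL(p‖q)), where KL(p‖q) = ∫ p log(p/q). -/

import Mathlib

open MeasureTheory

private lemma pinsker_h_deriv {x : ℝ} (hx : 0 < x) :
    HasDerivAt (fun y : ℝ => (y + 1) * Real.log y - 2 * (y - 1))
      (Real.log x + (x + 1) * x⁻¹ - 2) x := by
  have h1 : HasDerivAt (fun y : ℝ => (y + 1) * Real.log y)
      (1 * Real.log x + (x + 1) * x⁻¹) x := by
    exact ((hasDerivAt_id x).add_const 1).mul (Real.hasDerivAt_log hx.ne')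
  have h2 : HasDerivAt (fun y : ℝ => 2 * (y - 1)) 2 x := by
    simpa using ((hasDerivAt_id x).sub_const 1).const_mul 2
  exact (h1.sub h2).congr_deriv (by rw [one_mul])

private lemma pinsker_h_sign : MonotoneOn
    (fun y : ℝ => (y + 1) * Real.log y - 2 * (y - 1)) (Set.Ioi 0) := by
  have hi : interior (Set.Ioi (0:ℝ)) = Set.Ioi 0 := interior_Ioi
  refine monotoneOn_of_deriv_nonneg (convex_Ioi 0) ?_ ?_ ?_
  · intro x hx
    exact ((pinsker_h_deriv hx).continuousAt.continuousWithinAt)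
  · intro x hx
    rw [hi] at hx
    exact (pinsker_h_deriv hx).differentiableAt.differentiableWithinAt
  · intro x hx
    rw [hi] at hx
    rw [(pinsker_h_deriv hx).deriv]
    have := Real.one_sub_inv_le_log_of_pos hx
    have hx0 : x ≠ 0 := ne_of_gt hx
    have : (x + 1) * x⁻¹ = 1 + x⁻¹ := by field_simp
    rw [this]
    have := Real.one_sub_inv_le_log_of_pos hx
    linarith

private lemma pinsker_g_deriv {x : ℝ} (hx : 0 < x) :
    HasDerivAt (fun y : ℝ => (2 * y + 4) * (y * Real.log y - y + 1) - 3 * (y - 1) ^ 2)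
      (2 * (x * Real.log x - x + 1) + (2 * x + 4) * Real.log x - 3 * (2 * (x - 1))) x := by
  have hmul : HasDerivAt (fun y : ℝ => y * Real.log y) (Real.log x + 1) x := by
    have := (hasDerivAt_id x).mul (Real.hasDerivAt_log hx.ne')
    exact this.congr_deriv (by rw [id_eq, one_mul, mul_inv_cancel₀ hx.ne'])
  have h1 : HasDerivAt (fun y : ℝ => y * Real.log y - y + 1) (Real.log x) x := by
    simpa using (hmul.sub (hasDerivAt_id x)).add_const 1
  have h2 : HasDerivAt (fun y : ℝ => 2 * y + 4) 2 x := by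
    simpa using ((hasDerivAt_id x).const_mul 2).add_const 4
  have h3 : HasDerivAt (fun y : ℝ => (2 * y + 4) * (y * Real.log y - y + 1))
      (2 * (x * Real.log x - x + 1) + (2 * x + 4) * Real.log x) x := h2.mul h1
  have h4 : HasDerivAt (fun y : ℝ => 3 * (y - 1) ^ 2) (3 * (2 * (x - 1))) x := by
    simpa using (((hasDerivAt_id x).sub_const 1).pow 2).const_mul 3
  exact h3.sub h4

private lemma pinsker_g_cont : ContinuousOn
    (fun y : ℝ => (2 * y + 4) * (y * Real.log y - y + 1) - 3 * (y - 1) ^ 2) (Set.Ioi 0) :=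
  fun x hx => (pinsker_g_deriv hx).continuousAt.continuousWithinAt

private lemma pinsker_key_t {t : ℝ} (ht : 0 < t) :
    3 * (t - 1) ^ 2 ≤ (2 * t + 4) * (t * Real.log t - t + 1) := by
  set g : ℝ → ℝ := fun y => (2 * y + 4) * (y * Real.log y - y + 1) - 3 * (y - 1) ^ 2 with hg
  have hg1 : g 1 = 0 := by simp [hg]
  have hsign : ∀ x : ℝ, 0 < x →
      deriv g x = 4 * ((x + 1) * Real.log x - 2 * (x - 1)) := by
    intro x hx
    rw [(pinsker_g_deriv hx).deriv]; ring
  have hgoal : 0 ≤ g t := by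
    rcases le_or_gt 1 t with h1 | h1
    · -- t ≥ 1 : g monotone on Ici 1
      have hmono : MonotoneOn g (Set.Ici 1) := by
        refine monotoneOn_of_deriv_nonneg (convex_Ici 1) (pinsker_g_cont.mono ?_) ?_ ?_
        · intro x hx; exact lt_of_lt_of_le one_pos (Set.mem_Ici.mp hx)
        · intro x hx
          rw [interior_Ici] at hx
          exact (pinsker_g_deriv (lt_trans one_pos hx)).differentiableAt.differentiableWithinAt
        · intro x hx
          rw [interior_Ici] at hx
          rw [hsign x (lt_trans one_pos hx)]
          have := pinsker_h_sign (Set.mem_Ioi.mpr one_pos)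
            (Set.mem_Ioi.mpr (lt_trans one_pos hx)) hx.le
          simp only [Real.log_one] at this
          nlinarith
      have := hmono (Set.mem_Ici.mpr le_rfl) (Set.mem_Ici.mpr h1) h1
      rwa [hg1] at this
    · -- t ≤ 1 : g antitone on Ioc 0 1
      have hanti : AntitoneOn g (Set.Ioc 0 1) := by
        refine antitoneOn_of_deriv_nonpos (convex_Ioc 0 1) (pinsker_g_cont.mono ?_) ?_ ?_
        · intro x hx; exact hx.1
        · intro x hx
          rw [interior_Ioc] at hx
          exact (pinsker_g_deriv hx.1).differentiableAt.differentiableWithinAt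
        · intro x hx
          rw [interior_Ioc] at hx
          rw [hsign x hx.1]
          have := pinsker_h_sign (Set.mem_Ioi.mpr hx.1)
            (Set.mem_Ioi.mpr one_pos) hx.2.le
          simp only [Real.log_one] at this
          nlinarith
      have := hanti (Set.mem_Ioc.mpr ⟨ht, h1.le⟩) (Set.mem_Ioc.mpr ⟨one_pos, le_rfl⟩) h1.le
      rwa [hg1] at this
  have : 0 ≤ (2 * t + 4) * (t * Real.log t - t + 1) - 3 * (t - 1) ^ 2 := hgoal
  linarith

private lemma pinsker_key (a b : ℝ) (ha : 0 ≤ a) (hb : 0 ≤ b) (hab : b = 0 → a = 0) :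
    3 * (a - b) ^ 2 ≤ (2 * a + 4 * b) * (a * Real.log (a / b) - a + b) := by
  rcases eq_or_lt_of_le hb with hb0 | hb0
  · have ha0 := hab hb0.symm
    simp [← hb0, ha0]
  rcases eq_or_lt_of_le ha with ha0 | ha0
  · rw [← ha0]
    simp only [zero_div, Real.log_zero, mul_zero, zero_mul, zero_sub, neg_add_cancel,
      zero_mul]
    nlinarith
  have ht : 0 < a / b := div_pos ha0 hb0
  have hkey := pinsker_key_t ht
  set L := Real.log (a / b) with hL
  have hbne : b ≠ 0 := ne_of_gt hb0
  have hab' : a = (a / b) * b := (div_mul_cancel₀ a hbne).symm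
  have hmul := mul_le_mul_of_nonneg_right hkey (sq_nonneg b)
  rw [hab']
  nlinarith [hmul]

/-- Pinsker's inequality: for probability densities `p`, `q` w.r.t. a common σ-finite
measure `μ` (with `q = 0 → p = 0` a.e., so that KL is well defined and finite),
`‖p − q‖₁ ≤ √(2 KL(p‖q))` where `KL(p‖q) = ∫ p log(p/q)`. -/
theorem pinsker_inequality {α : Type*} [MeasurableSpace α] (μ : Measure α) [SigmaFinite μ]
    (p q : α → ℝ) (hp0 : ∀ x, 0 ≤ p x) (hq0 : ∀ x, 0 ≤ q x)
    (hpm : Measurable p) (hqm : Measurable q)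
    (hp1 : ∫ x, p x ∂μ = 1) (hq1 : ∫ x, q x ∂μ = 1)
    (hac : ∀ᵐ x ∂μ, q x = 0 → p x = 0)
    (hint : Integrable (fun x => p x * Real.log (p x / q x)) μ) :
    ∫ x, |p x - q x| ∂μ ≤ Real.sqrt (2 * ∫ x, p x * Real.log (p x / q x) ∂μ) := by
  classical
  set K : ℝ := ∫ x, p x * Real.log (p x / q x) ∂μ with hK
  set G : α → ℝ := fun x => p x * Real.log (p x / q x) - p x + q x with hGdef
  set w : α → ℝ := fun x => (2 * p x + 4 * q x) / 3 with hwdef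
  set v : α → ℝ := fun x => (p x - q x) ^ 2 / w x with hvdef
  have hP : Integrable p μ := by
    by_contra h
    rw [integral_undef h] at hp1; norm_num at hp1
  have hQ : Integrable q μ := by
    by_contra h
    rw [integral_undef h] at hq1; norm_num at hq1
  have hG : Integrable G μ := (hint.sub hP).add hQ
  have hsub : Integrable (fun x => p x * Real.log (p x / q x) - p x) μ := hint.sub hP
  have hKL : ∫ x, G x ∂μ = K := by
    have h1 : ∫ x, G x ∂μ = ∫ x, ((p x * Real.log (p x / q x) - p x) + q x) ∂μ := rfl
    rw [h1, integral_add hsub hQ, integral_sub hint hP, hp1, hq1, hK]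
    ring
  have hw0 : ∀ x, 0 ≤ w x := fun x => by
    have := hp0 x; have := hq0 x
    simp only [hwdef]; positivity
  have hv0 : ∀ x, 0 ≤ v x := fun x => div_nonneg (sq_nonneg _) (hw0 x)
  -- pointwise bound
  have hvG : ∀ᵐ x ∂μ, v x ≤ G x := by
    filter_upwards [hac] with x hx
    have hkey := pinsker_key (p x) (q x) (hp0 x) (hq0 x) hx
    rcases eq_or_lt_of_le (hw0 x) with hwx | hwx
    · have hwx' : 2 * p x + 4 * q x = 0 := by
        have h0 := hwx.symm
        simp only [hwdef] at h0
        linarith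
      have hpqx : p x = 0 ∧ q x = 0 := by
        constructor <;> nlinarith [hp0 x, hq0 x]
      simp [hvdef, hGdef, hpqx.1, hpqx.2]
    · show (p x - q x) ^ 2 / w x ≤ G x
      rw [div_le_iff₀ hwx]
      have h3 : G x * w x = (2 * p x + 4 * q x) * G x / 3 := by
        simp only [hwdef]; ring
      rw [h3, le_div_iff₀ (by norm_num : (0:ℝ) < 3)]
      have hGx : G x = p x * Real.log (p x / q x) - p x + q x := rfl
      rw [hGx]
      linarith [hkey]
  have hG0 : 0 ≤ᵐ[μ] G := by
    filter_upwards [hvG] with x hx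
    exact le_trans (hv0 x) hx
  have hvm : Measurable v := by
    apply Measurable.div
    · exact (hpm.sub hqm).pow_const 2
    · exact ((hpm.const_mul 2).add (hqm.const_mul 4)).div_const 3
  have hv_int : Integrable v μ := by
    refine Integrable.mono' hG hvm.aestronglyMeasurable ?_
    filter_upwards [hvG] with x hx
    rwa [Real.norm_of_nonneg (hv0 x)]
  have hw_int : Integrable w μ := ((hP.const_mul 2).add (hQ.const_mul 4)).div_const 3
  have hIw : ∫ x, w x ∂μ = 2 := by
    simp only [hwdef]
    rw [integral_div, integral_add (hP.const_mul 2) (hQ.const_mul 4),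
      integral_const_mul, integral_const_mul, hp1, hq1]
    norm_num
  have hIv0 : 0 ≤ ∫ x, v x ∂μ := integral_nonneg hv0
  have hIvK : ∫ x, v x ∂μ ≤ K := hKL ▸ integral_mono_ae hv_int hG hvG
  have hK0 : 0 ≤ K := le_trans hIv0 hIvK
  -- Cauchy-Schwarz
  set u : α → ℝ := fun x => Real.sqrt (w x) with hudef
  set s : α → ℝ := fun x => Real.sqrt (v x) with hsdef
  have hu_sq : ∀ x, u x ^ 2 = w x := fun x => Real.sq_sqrt (hw0 x)
  have hs_sq : ∀ x, s x ^ 2 = v x := fun x => Real.sq_sqrt (hv0 x)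
  have hu_mem : MemLp u 2 μ := by
    refine (memLp_two_iff_integrable_sq ?_).mpr ?_
    · exact (Real.continuous_sqrt.measurable.comp
        (((hpm.const_mul 2).add (hqm.const_mul 4)).div_const 3)).aestronglyMeasurable
    · have : (fun x => u x ^ 2) = w := funext hu_sq
      rw [this]; exact hw_int
  have hs_mem : MemLp s 2 μ := by
    refine (memLp_two_iff_integrable_sq ?_).mpr ?_
    · exact (Real.continuous_sqrt.measurable.comp hvm).aestronglyMeasurable
    · have : (fun x => s x ^ 2) = v := funext hs_sq
      rw [this]; exact hv_int
  have h_eq : ∀ᵐ x ∂μ, |p x - q x| = u x * s x := by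
    filter_upwards [] with x
    rcases eq_or_lt_of_le (hw0 x) with hwx | hwx
    · have hwx' : 2 * p x + 4 * q x = 0 := by
        have h0 := hwx.symm
        simp only [hwdef] at h0
        linarith
      have hpqx : p x = 0 ∧ q x = 0 := by
        constructor <;> nlinarith [hp0 x, hq0 x]
      simp [hudef, hsdef, hvdef, hpqx.1, hpqx.2, ← hwx]
    · have : u x * s x = Real.sqrt (w x * v x) := (Real.sqrt_mul (hw0 x) _).symm
      rw [this, hvdef]
      simp only
      rw [mul_div_cancel₀ _ (ne_of_gt hwx), Real.sqrt_sq_eq_abs]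
  have hconj : Real.HolderConjugate 2 2 := by
    constructor <;> norm_num
  have hCS : ∫ x, u x * s x ∂μ ≤
      (∫ x, u x ^ (2:ℝ) ∂μ) ^ ((1:ℝ)/2) * (∫ x, s x ^ (2:ℝ) ∂μ) ^ ((1:ℝ)/2) := by
    refine integral_mul_le_Lp_mul_Lq_of_nonneg hconj ?_ ?_ ?_ ?_
    · exact Filter.Eventually.of_forall fun x => Real.sqrt_nonneg _
    · exact Filter.Eventually.of_forall fun x => Real.sqrt_nonneg _
    · simpa using hu_mem
    · simpa using hs_mem
  have hrw : ∀ f : α → ℝ, (fun x => f x ^ (2:ℝ)) = fun x => f x ^ (2:ℕ) := by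
    intro f; funext x; rw [← Real.rpow_natCast (f x) 2]; norm_num
  rw [hrw u, hrw s] at hCS
  simp only [pow_two] at hCS
  have hCS2 : ∫ x, |p x - q x| ∂μ ≤
      (∫ x, w x ∂μ) ^ ((1:ℝ)/2) * (∫ x, v x ∂μ) ^ ((1:ℝ)/2) := by
    calc ∫ x, |p x - q x| ∂μ = ∫ x, u x * s x ∂μ := integral_congr_ae h_eq
      _ ≤ (∫ x, u x * u x ∂μ) ^ ((1:ℝ)/2) * (∫ x, s x * s x ∂μ) ^ ((1:ℝ)/2) := hCS
      _ = (∫ x, w x ∂μ) ^ ((1:ℝ)/2) * (∫ x, v x ∂μ) ^ ((1:ℝ)/2) := by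
          have hIuu : ∫ x, u x * u x ∂μ = ∫ x, w x ∂μ := by
            refine integral_congr_ae (Filter.Eventually.of_forall fun x => ?_)
            have := hu_sq x; rw [pow_two] at this; exact this
          have hIss : ∫ x, s x * s x ∂μ = ∫ x, v x ∂μ := by
            refine integral_congr_ae (Filter.Eventually.of_forall fun x => ?_)
            have := hs_sq x; rw [pow_two] at this; exact this
          rw [hIuu, hIss]
  rw [hIw] at hCS2
  have hfinal : (2:ℝ) ^ ((1:ℝ)/2) * (∫ x, v x ∂μ) ^ ((1:ℝ)/2) ≤ Real.sqrt (2 * K) := by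
    rw [Real.sqrt_eq_rpow, Real.mul_rpow (by norm_num) hK0]
    have := Real.rpow_le_rpow hIv0 hIvK (by norm_num : (0:ℝ) ≤ 1/2)
    have h2 : (0:ℝ) ≤ (2:ℝ) ^ ((1:ℝ)/2) := Real.rpow_nonneg (by norm_num) _
    exact mul_le_mul_of_nonneg_left this h2
  exact le_trans hCS2 hfinal
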